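/- For p, q ∈ [0,1] and η > 0, if kl(p,q) < 9η/2 then |p − (2(1−2η)q + 3η)/(2(1+η))| ≤ 3·√(4q(1−q)η + η²)/(2(1+η)). -/

import Mathlib

open Real

set_option maxHeartbeats 1600000 in
lemma log_ratio_lb {w : ℝ} (h0 : 0 ≤ w) (h1 : w < 1) :
    2*w + 2/3*w^3 ≤ Real.log (1+w) - Real.log (1-w) := by
  rcases eq_or_lt_of_le h0 with rfl | hw
  · simp
  · set f : ℝ → ℝ := fun x => Real.log (1+x) - Real.log (1-x) - (2*x + 2/3*x^3) with hf
    have hder : ∀ x ∈ Set.Icc (0:ℝ) w, HasDerivAt f (1/(1+x) - (-1/(1-x)) - (2 + 2*x^2)) x := by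
      intro x hx
      obtain ⟨hx0, hxw⟩ := hx
      have hx1 : (0:ℝ) < 1 + x := by linarith
      have hx2 : (0:ℝ) < 1 - x := by linarith
      have d1 : HasDerivAt (fun y : ℝ => Real.log (1+y)) (1/(1+x)) x := by
        have := (((hasDerivAt_id x).const_add (1:ℝ)).log hx1.ne')
        simpa using this
      have d2 : HasDerivAt (fun y : ℝ => Real.log (1-y)) (-1/(1-x)) x := by
        have := (((hasDerivAt_id x).const_sub (1:ℝ)).log hx2.ne')
        simpa using this
      have d3 : HasDerivAt (fun y : ℝ => 2*y + 2/3*y^3) (2 + 2*x^2) x := by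
        have := ((hasDerivAt_id x).const_mul (2:ℝ)).add ((hasDerivAt_pow 3 x).const_mul (2/3:ℝ))
        exact this.congr_deriv (by push_cast; ring)
      exact (d1.sub d2).sub d3
    have hmono : MonotoneOn f (Set.Icc 0 w) := by
      apply monotoneOn_of_deriv_nonneg (convex_Icc 0 w)
      · exact fun x hx => ((hder x hx).differentiableAt.continuousAt).continuousWithinAt
      · intro x hx
        rw [interior_Icc] at hx
        exact ((hder x (Set.Ioo_subset_Icc_self hx)).differentiableAt).differentiableWithinAt
      · intro x hx
        rw [interior_Icc] at hx
        rw [(hder x (Set.Ioo_subset_Icc_self hx)).deriv]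
        have hx1 : (0:ℝ) < 1 + x := by linarith [hx.1]
        have hx2 : (0:ℝ) < 1 - x := by linarith [hx.2, h1]
        have e : 1/(1+x) - (-1/(1-x)) - (2 + 2*x^2) = 2*x^4/((1+x)*(1-x)) := by
          field_simp
          ring
        rw [e]
        positivity
    have h0w : f 0 ≤ f w := hmono (Set.left_mem_Icc.mpr h0) (Set.right_mem_Icc.mpr h0) h0
    have f0 : f 0 = 0 := by simp [hf]
    rw [f0] at h0w
    simp only [hf] at h0w
    linarith

set_option maxHeartbeats 1600000 in
lemma log_ratio_ub {w : ℝ} (h0 : 0 ≤ w) (h1 : w < 1) :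
    Real.log (1+w) - Real.log (1-w) ≤ 2*w + 2/3*w^3 + 2/5*(w^5/(1-w^2)) := by
  rcases eq_or_lt_of_le h0 with rfl | hw
  · simp
  · set f : ℝ → ℝ := fun x =>
      2*x + 2/3*x^3 + 2/5*(x^5/(1-x^2)) - (Real.log (1+x) - Real.log (1-x)) with hf
    have hder : ∀ x ∈ Set.Icc (0:ℝ) w,
        HasDerivAt f (4/5*x^6/((1+x)*(1-x))^2) x := by
      intro x hx
      obtain ⟨hx0, hxw⟩ := hx
      have hx1 : (0:ℝ) < 1 + x := by linarith
      have hx2 : (0:ℝ) < 1 - x := by linarith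
      have hx3 : (1:ℝ) - x^2 ≠ 0 := by nlinarith
      have d1 : HasDerivAt (fun y : ℝ => Real.log (1+y)) (1/(1+x)) x := by
        have := (((hasDerivAt_id x).const_add (1:ℝ)).log hx1.ne')
        simpa using this
      have d2 : HasDerivAt (fun y : ℝ => Real.log (1-y)) (-1/(1-x)) x := by
        have := (((hasDerivAt_id x).const_sub (1:ℝ)).log hx2.ne')
        simpa using this
      have d3 : HasDerivAt (fun y : ℝ => 2*y + 2/3*y^3) (2 + 2*x^2) x := by
        have := ((hasDerivAt_id x).const_mul (2:ℝ)).add ((hasDerivAt_pow 3 x).const_mul (2/3:ℝ))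
        exact this.congr_deriv (by push_cast; ring)
      have dq : HasDerivAt (fun y : ℝ => 1 - y^2) (-(2*x)) x := by
        have := (hasDerivAt_pow 2 x).const_sub (1:ℝ)
        exact this.congr_deriv (by push_cast; ring)
      have d4 : HasDerivAt (fun y : ℝ => 2/5*(y^5/(1-y^2)))
          (2/5*((5*x^4*(1-x^2) - x^5*(-(2*x)))/(1-x^2)^2)) x := by
        have := ((hasDerivAt_pow 5 x).div dq hx3).const_mul (2/5:ℝ)
        exact this.congr_deriv (by push_cast; ring)
      have hd := (d3.add d4).sub (d1.sub d2)
      exact hd.congr_deriv (by field_simp; ring)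
    have hmono : MonotoneOn f (Set.Icc 0 w) := by
      apply monotoneOn_of_deriv_nonneg (convex_Icc 0 w)
      · exact fun x hx => ((hder x hx).differentiableAt.continuousAt).continuousWithinAt
      · intro x hx
        rw [interior_Icc] at hx
        exact ((hder x (Set.Ioo_subset_Icc_self hx)).differentiableAt).differentiableWithinAt
      · intro x hx
        rw [interior_Icc] at hx
        rw [(hder x (Set.Ioo_subset_Icc_self hx)).deriv]
        have hx1 : (0:ℝ) < 1 + x := by linarith [hx.1]
        have hx2 : (0:ℝ) < 1 - x := by linarith [hx.2, h1]
        positivity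
    have h0w : f 0 ≤ f w := hmono (Set.left_mem_Icc.mpr h0) (Set.right_mem_Icc.mpr h0) h0
    have f0 : f 0 = 0 := by simp [hf]
    rw [f0] at h0w
    simp only [hf] at h0w
    linarith

set_option maxHeartbeats 1600000 in
lemma ratcore {p q : ℝ} (hq : 0 < q) (hqp : q < p) (hp : p < 1) :
    9/2*(p-q)^2/(3*p*(1-p)+6*q*(1-q)+2*(p-q)^2)
      ≤ p*(2*((p-q)/(p+q)) + 2/3*((p-q)/(p+q))^3)
        - (1-p)*(2*((p-q)/(2-p-q)) + 2/3*((p-q)/(2-p-q))^3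
            + 2/5*(((p-q)/(2-p-q))^5/(1-((p-q)/(2-p-q))^2))) := by
  have hpq : (0:ℝ) < p + q := by linarith
  have hs : (0:ℝ) < 2 - p - q := by linarith
  have h1q : (0:ℝ) < 1 - q := by linarith
  have h1 : (0:ℝ) ≤ q := hq.le
  have h2 : (0:ℝ) ≤ p - q := by linarith
  have h3 : (0:ℝ) ≤ 1 - p := by linarith
  have hx2 : (0:ℝ) < (p-q)^2 := pow_pos (by linarith) 2
  have hD0 : (0:ℝ) < 3*p*(1-p)+6*q*(1-q)+2*(p-q)^2 := by nlinarith
  have h1p : (0:ℝ) < 1 - p := by linarith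
  have hw2 : 1-((p-q)/(2-p-q))^2 = 4*(1-p)*(1-q)/(2-p-q)^2 := by
    field_simp
    ring
  have hT : (0:ℝ) ≤ 120*(p-q)*(1-p)^5 + 380*(p-q)^2*(1-p)^4 + 470*(p-q)^3*(1-p)^3 + 305*(p-q)^4*(1-p)^2 + 111*(p-q)^5*(1-p) + 19*(p-q)^6 + 480*q*(1-p)^5 + 1520*q*(p-q)*(1-p)^4 + 1880*q*(p-q)^2*(1-p)^3 + 1320*q*(p-q)^3*(1-p)^2 + 574*q*(p-q)^4*(1-p) + 121*q*(p-q)^5 + 600*q^2*(p-q)^2*(1-p)^2 + 780*q^2*(p-q)^3*(1-p) + 270*q^2*(p-q)^4 + 880*q^3*(p-q)*(1-p)^2 + 1144*q^3*(p-q)^2*(1-p) + 396*q^3*(p-q)^3 + 480*q^4*(1-p)^2 + 624*q^4*(p-q)*(1-p) + 216*q^4*(p-q)^2 :=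
    (add_nonneg (add_nonneg (add_nonneg (add_nonneg (add_nonneg (add_nonneg (add_nonneg (add_nonneg (add_nonneg (add_nonneg (add_nonneg (add_nonneg (add_nonneg (add_nonneg (add_nonneg (add_nonneg (add_nonneg (add_nonneg (add_nonneg (add_nonneg (mul_nonneg (mul_nonneg (by norm_num : (0:ℝ) ≤ 120) h2) (pow_nonneg h3 5)) (mul_nonneg (mul_nonneg (by norm_num : (0:ℝ) ≤ 380) (pow_nonneg h2 2)) (pow_nonneg h3 4))) (mul_nonneg (mul_nonneg (by norm_num : (0:ℝ) ≤ 470) (pow_nonneg h2 3)) (pow_nonneg h3 3))) (mul_nonneg (mul_nonneg (by norm_num : (0:ℝ) ≤ 305) (pow_nonneg h2 4)) (pow_nonneg h3 2))) (mul_nonneg (mul_nonneg (by norm_num : (0:ℝ) ≤ 111) (pow_nonneg h2 5)) h3)) (mul_nonneg (by norm_num : (0:ℝ) ≤ 19) (pow_nonneg h2 6))) (mul_nonneg (mul_nonneg (by norm_num : (0:ℝ) ≤ 480) h1) (pow_nonneg h3 5))) (mul_nonneg (mul_nonneg (mul_nonneg (by norm_num : (0:ℝ) ≤ 1520) h1)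 h2) (pow_nonneg h3 4))) (mul_nonneg (mul_nonneg (mul_nonneg (by norm_num : (0:ℝ) ≤ 1880) h1) (pow_nonneg h2 2)) (pow_nonneg h3 3))) (mul_nonneg (mul_nonneg (mul_nonneg (by norm_num : (0:ℝ) ≤ 1320) h1) (pow_nonneg h2 3)) (pow_nonneg h3 2))) (mul_nonneg (mul_nonneg (mul_nonneg (by norm_num : (0:ℝ) ≤ 574) h1) (pow_nonneg h2 4)) h3)) (mul_nonneg (mul_nonneg (by norm_num : (0:ℝ) ≤ 121) h1) (pow_nonneg h2 5))) (mul_nonneg (mul_nonneg (mul_nonneg (by norm_num : (0:ℝ) ≤ 600) (pow_nonneg h1 2)) (pow_nonneg h2 2)) (pow_nonneg h3 2))) (mul_nonneg (mul_nonneg (mul_nonneg (by norm_num : (0:ℝ) ≤ 780) (pow_nonneg h1 2)) (pow_nonneg h2 3)) h3)) (mul_nonneg (mul_nonneg (by norm_num : (0:ℝ) ≤ 270) (pow_nonneg h1 2)) (pow_nonneg h2 4))) (mul_nonneg (mul_nonneg (mul_nonneg (by norm_num : (0:ℝ) ≤ 880) (pow_nonneg h1 3)) h2) (pow_nonneg h3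 2))) (mul_nonneg (mul_nonneg (mul_nonneg (by norm_num : (0:ℝ) ≤ 1144) (pow_nonneg h1 3)) (pow_nonneg h2 2)) h3)) (mul_nonneg (mul_nonneg (by norm_num : (0:ℝ) ≤ 396) (pow_nonneg h1 3)) (pow_nonneg h2 3))) (mul_nonneg (mul_nonneg (by norm_num : (0:ℝ) ≤ 480) (pow_nonneg h1 4)) (pow_nonneg h3 2))) (mul_nonneg (mul_nonneg (mul_nonneg (by norm_num : (0:ℝ) ≤ 624) (pow_nonneg h1 4)) h2) h3)) (mul_nonneg (mul_nonneg (by norm_num : (0:ℝ) ≤ 216) (pow_nonneg h1 4)) (pow_nonneg h2 2)))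
  have eA : p*(2*((p-q)/(p+q)) + 2/3*((p-q)/(p+q))^3)
      = (2*p*(p-q)*(3*(p+q)^2+(p-q)^2))/(3*(p+q)^3) := by
    field_simp [hpq.ne']
  have eB : (1-p)*(2*((p-q)/(2-p-q)) + 2/3*((p-q)/(2-p-q))^3
            + 2/5*(((p-q)/(2-p-q))^5/(1-((p-q)/(2-p-q))^2)))
      = (20*(1-p)*(1-q)*(p-q)*(3*(2-p-q)^2+(p-q)^2) + 3*(p-q)^5)
          /(30*(2-p-q)^3*(1-q)) := by
    rw [hw2]
    field_simp [hs.ne', h1q.ne', h1p.ne']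
    ring
  rw [eA, eB, div_sub_div _ _ (by positivity) (by positivity),
    div_le_div_iff₀ hD0 (by positivity)]
  nlinarith [mul_nonneg (pow_nonneg h2 4) hT, hx2, hD0]

set_option maxHeartbeats 1600000 in
lemma klR_lower {p q : ℝ} (hq : 0 < q) (hqp : q < p) (hp : p < 1) :
    9/2*(p-q)^2/(3*p*(1-p)+6*q*(1-q)+2*(p-q)^2)
      ≤ p * Real.log (p/q) + (1-p) * Real.log ((1-p)/(1-q)) := by
  have hpq : (0:ℝ) < p + q := by linarith
  have hs : (0:ℝ) < 2 - p - q := by linarith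
  have h1q : (0:ℝ) < 1 - q := by linarith
  have h1p : (0:ℝ) < 1 - p := by linarith
  have hp0 : (0:ℝ) < p := by linarith
  have hz0 : 0 ≤ (p-q)/(p+q) := div_nonneg (by linarith) hpq.le
  have hz1 : (p-q)/(p+q) < 1 := (div_lt_one hpq).mpr (by linarith)
  have hw0 : 0 ≤ (p-q)/(2-p-q) := div_nonneg (by linarith) hs.le
  have hw1 : (p-q)/(2-p-q) < 1 := (div_lt_one hs).mpr (by linarith)
  -- identify logs
  have ez : Real.log (p/q) = Real.log (1+(p-q)/(p+q)) - Real.log (1-(p-q)/(p+q)) := by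
    have e1 : (1+(p-q)/(p+q)) = 2*p/(p+q) := by field_simp [hpq.ne']; ring
    have e2 : (1-(p-q)/(p+q)) = 2*q/(p+q) := by field_simp [hpq.ne']; ring
    have e3 : Real.log (2*p/(p+q)) - Real.log (2*q/(p+q)) = Real.log p - Real.log q := by
      rw [Real.log_div (by positivity) hpq.ne', Real.log_div (by positivity) hpq.ne',
        Real.log_mul two_ne_zero hp0.ne', Real.log_mul two_ne_zero hq.ne']
      ring
    rw [e1, e2, e3, Real.log_div hp0.ne' hq.ne']
  have ew : Real.log ((1-p)/(1-q))
      = -(Real.log (1+(p-q)/(2-p-q)) - Real.log (1-(p-q)/(2-p-q))) := by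
    have e1 : (1+(p-q)/(2-p-q)) = 2*(1-q)/(2-p-q) := by field_simp [hs.ne']; ring
    have e2 : (1-(p-q)/(2-p-q)) = 2*(1-p)/(2-p-q) := by field_simp [hs.ne']; ring
    have e3 : Real.log (2*(1-q)/(2-p-q)) - Real.log (2*(1-p)/(2-p-q))
        = Real.log (1-q) - Real.log (1-p) := by
      rw [Real.log_div (by positivity) hs.ne', Real.log_div (by positivity) hs.ne',
        Real.log_mul two_ne_zero h1q.ne', Real.log_mul two_ne_zero h1p.ne']
      ring
    rw [e1, e2, e3, Real.log_div h1p.ne' h1q.ne']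
    ring
  have hA : p*(2*((p-q)/(p+q)) + 2/3*((p-q)/(p+q))^3) ≤ p * Real.log (p/q) := by
    rw [ez]
    exact mul_le_mul_of_nonneg_left (log_ratio_lb hz0 hz1) hp0.le
  have hB : -((1-p)*(2*((p-q)/(2-p-q)) + 2/3*((p-q)/(2-p-q))^3
        + 2/5*(((p-q)/(2-p-q))^5/(1-((p-q)/(2-p-q))^2))))
      ≤ (1-p) * Real.log ((1-p)/(1-q)) := by
    rw [ew, mul_neg, neg_le_neg_iff]
    exact mul_le_mul_of_nonneg_left (log_ratio_ub hw0 hw1) h1p.le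
  have := ratcore hq hqp hp
  linarith

lemma klR_edge {q : ℝ} (hq : 0 < q) (hq1 : q < 1) :
    9/2*(1-q)^2/(3*1*(1-1)+6*q*(1-q)+2*(1-q)^2) ≤ -Real.log q := by
  have h1q : (0:ℝ) < 1 - q := by linarith
  have hpq : (0:ℝ) < 1 + q := by linarith
  have hz0 : 0 ≤ (1-q)/(1+q) := div_nonneg h1q.le hpq.le
  have hz1 : (1-q)/(1+q) < 1 := (div_lt_one hpq).mpr (by linarith)
  have ez : -Real.log q = Real.log (1+(1-q)/(1+q)) - Real.log (1-(1-q)/(1+q)) := by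
    have e1 : (1+(1-q)/(1+q)) = 2/(1+q) := by field_simp [hpq.ne']; ring
    have e2 : (1-(1-q)/(1+q)) = 2*q/(1+q) := by field_simp [hpq.ne']; ring
    have e3 : Real.log (2/(1+q)) - Real.log (2*q/(1+q)) = -Real.log q := by
      rw [Real.log_div two_ne_zero hpq.ne', Real.log_div (by positivity) hpq.ne',
        Real.log_mul two_ne_zero hq.ne']
      ring
    rw [e1, e2, e3]
  have hlb := log_ratio_lb hz0 hz1
  rw [ez]
  refine le_trans ?_ hlb
  have e3 : 2*((1-q)/(1+q)) + 2/3*((1-q)/(1+q))^3 = (8*(1-q)*(1+q+q^2))/(3*(1+q)^3) := by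
    field_simp [hpq.ne']
    ring
  calc 9/2*(1-q)^2/(3*1*(1-1)+6*q*(1-q)+2*(1-q)^2)
      ≤ (8*(1-q)*(1+q+q^2))/(3*(1+q)^3) := by
        rw [div_le_div_iff₀ (by nlinarith) (by positivity)]
        nlinarith [pow_pos h1q 2, sq_nonneg q, mul_pos hq h1q, pow_pos hq 3]
    _ = 2*((1-q)/(1+q)) + 2/3*((1-q)/(1+q))^3 := e3.symm

set_option maxHeartbeats 1600000 in
lemma main_half {p q η : ℝ} (hq0 : 0 < q) (hq1 : q < 1) (hqp : q < p) (hp1 : p ≤ 1)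
    (hη : 0 < η)
    (hkl : p * Real.log (p/q) + (1-p) * Real.log ((1-p)/(1-q)) < 9*η/2) :
    (p-q)^2 ≤ η * (3*p*(1-p)+6*q*(1-q)+2*(p-q)^2) := by
  have hD0 : (0:ℝ) < 3*p*(1-p)+6*q*(1-q)+2*(p-q)^2 := by
    nlinarith [pow_pos (show (0:ℝ) < p - q by linarith) 2, mul_pos hq0 (show (0:ℝ) < 1-q by linarith),
      mul_nonneg (show (0:ℝ) ≤ p by linarith) (show (0:ℝ) ≤ 1-p by linarith)]
  have hlb : 9/2*(p-q)^2/(3*p*(1-p)+6*q*(1-q)+2*(p-q)^2) < 9*η/2 := by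
    rcases eq_or_lt_of_le hp1 with rfl | hp1'
    · have := klR_edge hq0 hq1
      have hkl' : -Real.log q < 9*η/2 := by
        have e : (1:ℝ) * Real.log (1/q) + (1-1) * Real.log ((1-1)/(1-q)) = -Real.log q := by
          rw [one_div, Real.log_inv]
          ring
        rw [e] at hkl
        exact hkl
      calc 9/2*(1-q)^2/(3*1*(1-1)+6*q*(1-q)+2*(1-q)^2) ≤ -Real.log q := this
        _ < 9*η/2 := hkl'
    · exact lt_of_le_of_lt (klR_lower hq0 hqp hp1') hkl
  rw [div_lt_iff₀ hD0] at hlb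
  nlinarith [hlb, hD0]

lemma main_quad {p q η : ℝ} (hp0 : 0 ≤ p) (hp1 : p ≤ 1) (hq0 : 0 ≤ q) (hq1 : q ≤ 1)
    (hη : 0 < η) (hz : q = 0 → p = 0) (ho : q = 1 → p = 1)
    (hkl : p * Real.log (p/q) + (1-p) * Real.log ((1-p)/(1-q)) < 9*η/2) :
    (p-q)^2 ≤ η * (3*p*(1-p)+6*q*(1-q)+2*(p-q)^2) := by
  rcases eq_or_ne p q with rfl | hne
  · have h1 : (0:ℝ) ≤ p*(1-p) := mul_nonneg hp0 (by linarith)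
    nlinarith [h1]
  have hq0' : 0 < q := hq0.lt_of_ne fun h => hne (by rw [hz h.symm]; exact h)
  have hq1' : q < 1 := lt_of_le_of_ne hq1 fun h => hne (by rw [ho h]; exact h.symm)
  rcases lt_or_gt_of_ne hne with hlt | hgt
  · -- p < q : symmetrize
    have hkl' : (1-p) * Real.log ((1-p)/(1-q)) + (1-(1-p)) * Real.log ((1-(1-p))/(1-(1-q)))
        < 9*η/2 := by
      have e : (1-(1-p)) * Real.log ((1-(1-p))/(1-(1-q))) = p * Real.log (p/q) := by
        rw [show (1:ℝ)-(1-p) = p by ring, show (1:ℝ)-(1-q) = q by ring]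
      rw [e]
      linarith [hkl]
    have := main_half (p := 1-p) (q := 1-q) (by linarith) (by linarith) (by linarith)
      (by linarith) hη hkl'
    nlinarith [this]
  · exact main_half hq0' hq1' hgt hp1 hη hkl

/-- The Bernoulli Kullback–Leibler divergence `kl : [0,1] × [0,1] → [0,∞]`, with the
conventions `kl(0,q) = −log(1−q)`, `kl(1,q) = −log q`, and the value `∞` when a
logarithm of zero would occur. -/
noncomputable def bernKL (p q : ℝ) : EReal :=
  if p = 0 then (if q = 1 then ⊤ else ((-Real.log (1 - q) : ℝ) : EReal))
  else if p = 1 then (if q = 0 then ⊤ else ((-Real.log q : ℝ) : EReal))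
  else if q = 0 ∨ q = 1 then ⊤
  else ((p * Real.log (p / q) + (1 - p) * Real.log ((1 - p) / (1 - q)) : ℝ) : EReal)


set_option maxHeartbeats 1600000 in
/-- If `kl(p,q) < 9η/2` then `|p − (2(1−2η)q + 3η)/(2(1+η))| ≤ 3√(4q(1−q)η + η²)/(2(1+η))`. -/
theorem bernKL_p_localization (p q η : ℝ) (hp : p ∈ Set.Icc (0:ℝ) 1)
    (hq : q ∈ Set.Icc (0:ℝ) 1) (hη : 0 < η)
    (h : bernKL p q < ((9 * η / 2 : ℝ) : EReal)) :
    |p - (2 * (1 - 2 * η) * q + 3 * η) / (2 * (1 + η))| ≤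
      3 * Real.sqrt (4 * q * (1 - q) * η + η ^ 2) / (2 * (1 + η)) := by
  obtain ⟨hp0, hp1⟩ := hp
  obtain ⟨hq0, hq1⟩ := hq
  -- Step A: extract the real KL inequality
  have hmain : (p-q)^2 ≤ η * (3*p*(1-p)+6*q*(1-q)+2*(p-q)^2) := by
    unfold bernKL at h
    split_ifs at h with h1 h2 h3 h4 h5
    · exact absurd h not_top_lt
    · -- p = 0, q ≠ 1
      have hr : -Real.log (1-q) < 9*η/2 := by exact_mod_cast h
      refine main_quad hp0 hp1 hq0 hq1 hη (fun _ => h1) (fun hq' => absurd hq' h2) ?_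
      rw [h1]
      have e : (0:ℝ) * Real.log (0/q) + (1-0) * Real.log ((1-0)/(1-q)) = -Real.log (1-q) := by
        rw [show ((1:ℝ)-0)/(1-q) = (1-q)⁻¹ by rw [show (1:ℝ)-0 = 1 by norm_num, one_div], Real.log_inv]
        ring
      rw [e]
      exact hr
    · exact absurd h not_top_lt
    · -- p = 1, q ≠ 0
      have hr : -Real.log q < 9*η/2 := by exact_mod_cast h
      refine main_quad hp0 hp1 hq0 hq1 hη (fun hq' => absurd hq' h4) (fun _ => h3) ?_
      rw [h3]
      have e : (1:ℝ) * Real.log (1/q) + (1-1) * Real.log ((1-1)/(1-q)) = -Real.log q := by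
        rw [one_div, Real.log_inv]
        ring
      rw [e]
      exact hr
    · exact absurd h not_top_lt
    · push_neg at h5
      have hr : p * Real.log (p/q) + (1-p) * Real.log ((1-p)/(1-q)) < 9*η/2 := by
        exact_mod_cast h
      exact main_quad hp0 hp1 hq0 hq1 hη (fun hq' => absurd hq' h5.1)
        (fun hq' => absurd hq' h5.2) hr
  -- Step B
  have h2η : (0:ℝ) < 2*(1+η) := by linarith
  have hD : (0:ℝ) ≤ 4*q*(1-q)*η + η^2 := by
    nlinarith [mul_nonneg (mul_nonneg hq0 (show (0:ℝ) ≤ 1-q by linarith)) hη.le, sq_nonneg η]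
  have erw : p - (2*(1-2*η)*q + 3*η)/(2*(1+η))
      = (2*(1+η)*p - (2*(1-2*η)*q + 3*η))/(2*(1+η)) := by
    field_simp
  rw [erw, abs_div, abs_of_pos h2η]
  have hy2 : (2*(1+η)*p - (2*(1-2*η)*q + 3*η))^2 ≤ 9*(4*q*(1-q)*η + η^2) := by
    nlinarith [mul_nonneg (show (0:ℝ) ≤ 1+η by linarith) (sub_nonneg.mpr hmain)]
  have habs : |2*(1+η)*p - (2*(1-2*η)*q + 3*η)| ≤ 3*Real.sqrt (4*q*(1-q)*η + η^2) := by
    rw [← Real.sqrt_sq_eq_abs]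
    calc Real.sqrt ((2*(1+η)*p - (2*(1-2*η)*q + 3*η))^2)
        ≤ Real.sqrt (9*(4*q*(1-q)*η + η^2)) := Real.sqrt_le_sqrt hy2
      _ = 3*Real.sqrt (4*q*(1-q)*η + η^2) := by
          rw [show (9:ℝ)*(4*q*(1-q)*η + η^2) = 3^2*(4*q*(1-q)*η + η^2) by norm_num,
            Real.sqrt_mul (by positivity), Real.sqrt_sq (by norm_num)]
  have goalrw : 3 * Real.sqrt (4 * q * (1 - q) * η + η ^ 2) / (2 * (1 + η))
      = 3 * Real.sqrt (4*q*(1-q)*η + η^2) / (2*(1+η)) := by ring_nf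
  rw [goalrw]
  gcongr
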